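/- Let $q$ be a prime power, $\ell$ a prime dividing $q-1$, and $m = \sum_{i=0}^s a_i \ell^i$ the $\ell$-adic expansion of $m$. Then $v_\ell\big(\prod_{i=1}^m (q^i-1)\big) = \sum_{i=0}^s a_i \cdot v_\ell\big(\prod_{j=1}^{\ell^i}(q^j-1)\big)$; that is, the subgroup $\prod_{i=0}^s \mathrm{GL}_{\ell^i}(q)^{a_i}$ of $\mathrm{GL}_m(q)$ has order with the same $\ell$-part as $|\mathrm{GL}_m(q)|$, hence contains a Sylow $\ell$-subgroup. -/

import Mathlib

private lemma myD (b : ℕ) (hb : 2 ≤ b) : ∀ (L : List ℕ), (∀ x ∈ L, x < b) → ∀ j : ℕ,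
    Nat.ofDigits b L / b ^ j = ∑ k ∈ Finset.range L.length, L.getD k 0 * (b ^ k / b ^ j) := by
  intro L
  induction L with
  | nil => intro _ j; simp [Nat.ofDigits]
  | cons a L ih =>
    intro hL j
    have ha : a < b := hL a (by simp)
    have hL' : ∀ x ∈ L, x < b := fun x hx => hL x (by simp [hx])
    have hb0 : 0 < b := by omega
    cases j with
    | zero =>
      simp only [pow_zero, Nat.div_one, List.length_cons]
      rw [Nat.ofDigits_cons, Finset.sum_range_succ']
      simp only [List.getD_cons_succ, List.getD_cons_zero, pow_zero, mul_one]
      have ih0 := ih hL' 0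
      simp only [pow_zero, Nat.div_one] at ih0
      rw [ih0, add_comm, Finset.mul_sum]
      congr 1
      exact Finset.sum_congr rfl fun k _ => by rw [pow_succ]; ring
    | succ j =>
      rw [Nat.ofDigits_cons, pow_succ', ← Nat.div_div_eq_div_mul,
        Nat.add_mul_div_left _ _ hb0, Nat.div_eq_of_lt ha, zero_add, ih hL' j]
      simp only [List.length_cons]
      rw [Finset.sum_range_succ']
      simp only [List.getD_cons_succ, List.getD_cons_zero, pow_zero]
      have hpj : 0 < b ^ j := Nat.pow_pos hb0
      have h1 : 1 / (b * b ^ j) = 0 := Nat.div_eq_of_lt (by nlinarith)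
      rw [h1, mul_zero, add_zero]
      refine Finset.sum_congr rfl fun k _ => ?_
      congr 1
      rw [pow_succ' b k, Nat.mul_div_mul_left _ _ hb0]

private lemma geomId (q : ℕ) (hq : 1 ≤ q) : ∀ n : ℕ,
    (q - 1) * ∑ i ∈ Finset.range n, q ^ i = q ^ n - 1 := by
  intro n
  induction n with
  | zero => simp
  | succ n ih =>
    rw [Finset.sum_range_succ, Nat.mul_add, ih]
    have h1 : 1 ≤ q ^ n := Nat.one_le_pow _ _ (by omega)
    have h3 : (q - 1) * q ^ n = q * q ^ n - q ^ n := by rw [Nat.sub_mul, one_mul]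
    have h4 : q * q ^ n = q ^ (n + 1) := (pow_succ' q n).symm
    have h5 : q ^ n ≤ q ^ (n + 1) := Nat.pow_le_pow_right (by omega) (by omega)
    omega

private lemma oddSum (q n : ℕ) (hq : q % 2 = 1) (hn : n % 2 = 1) :
    (∑ i ∈ Finset.range n, q ^ i) % 2 = 1 := by
  have h : ∀ i : ℕ, q ^ i % 2 = 1 := fun i => Nat.odd_iff.mp ((Nat.odd_iff.mpr hq).pow)
  rw [Finset.sum_nat_mod]
  have : ∑ i ∈ Finset.range n, q ^ i % 2 = n := by simp [h]
  rw [this, hn]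

private lemma valV (q ℓ : ℕ) (hℓ : ℓ.Prime) (hq3 : 3 ≤ q) (hdvd : ℓ ∣ q - 1)
    (n : ℕ) (hn : n ≠ 0) :
    (q ^ n - 1).factorization ℓ =
      (q - 1).factorization ℓ
        + (if ℓ ∣ n then (if ℓ = 2 then (q + 1).factorization 2 - 1 else 0) else 0)
        + n.factorization ℓ := by
  have hq1 : ¬ ℓ ∣ q := by
    intro h
    have h2 : ℓ ∣ q - (q - 1) := Nat.dvd_sub h hdvd
    have h3 : q - (q - 1) = 1 := by omega
    rw [h3] at h2
    exact absurd (Nat.dvd_one.mp h2) hℓ.one_lt.ne'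
  by_cases h2 : ℓ = 2
  · subst h2
    have hqodd : q % 2 = 1 := by obtain ⟨k, hk⟩ := hdvd; omega
    rcases Nat.even_or_odd n with hne | hno
    · have hdn : 2 ∣ n := hne.two_dvd
      have hx : ¬ 2 ∣ q := by omega
      have key := padicValNat.pow_two_sub_pow (x := q) (y := 1) (by omega) (by simpa using hdvd)
        hx hn hne
      simp only [one_pow] at key
      have hv1 : 0 < (q + 1).factorization 2 :=
        Nat.Prime.factorization_pos_of_dvd Nat.prime_two (by omega) (by omega)
      rw [if_pos hdn, if_pos rfl]
      simp only [Nat.factorization_def _ Nat.prime_two] at hv1 ⊢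
      omega
    · have hno' : n % 2 = 1 := Nat.odd_iff.mp hno
      have hdn : ¬ 2 ∣ n := by omega
      have hS : (∑ i ∈ Finset.range n, q ^ i) % 2 = 1 := oddSum q n hqodd hno'
      have key : q ^ n - 1 = (q - 1) * ∑ i ∈ Finset.range n, q ^ i := (geomId q (by omega) n).symm
      have e1 : (∑ i ∈ Finset.range n, q ^ i).factorization 2 = 0 :=
        Nat.factorization_eq_zero_of_not_dvd (by omega)
      have e2 : n.factorization 2 = 0 := Nat.factorization_eq_zero_of_not_dvd hdn
      rw [key, Nat.factorization_mul (by omega) (by omega)]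
      simp [Finsupp.add_apply, e1, e2, hdn]
  · haveI : Fact ℓ.Prime := ⟨hℓ⟩
    have hodd : Odd ℓ := hℓ.odd_of_ne_two h2
    have key := padicValNat.pow_sub_pow (p := ℓ) hodd (x := q) (y := 1) (by omega) hdvd hq1 hn
    simp only [one_pow] at key
    simp only [if_neg h2, ite_self, add_zero]
    simp only [Nat.factorization_def _ hℓ]
    omega

private lemma sumE (c : ℕ) (v : ℕ) :
    ∑ j ∈ Finset.Icc 1 v, (if j = 1 then c + 1 else 1) = (if 1 ≤ v then c else 0) + v := by
  induction v with
  | zero => simp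
  | succ v ih =>
    rw [Finset.sum_Icc_succ_top (by omega), ih]
    split_ifs <;> omega

private lemma formulaF (q ℓ : ℕ) (hℓ : ℓ.Prime) (hq3 : 3 ≤ q) (hdvd : ℓ ∣ q - 1)
    (c : ℕ) (hc : c = if ℓ = 2 then (q + 1).factorization 2 - 1 else 0)
    (J : ℕ) : ∀ n : ℕ, n < ℓ ^ J →
    (∏ i ∈ Finset.range n, (q ^ (i + 1) - 1)).factorization ℓ =
      (q - 1).factorization ℓ * n
        + ∑ j ∈ Finset.Icc 1 J, (if j = 1 then c + 1 else 1) * (n / ℓ ^ j) := by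
  intro n
  induction n with
  | zero => intro _; simp
  | succ n ih =>
    intro hlt
    have hterm : ∀ i : ℕ, q ^ (i + 1) - 1 ≠ 0 := by
      intro i
      have h : q ≤ q ^ (i + 1) := Nat.le_self_pow (by omega) q
      omega
    have hprod : (∏ i ∈ Finset.range n, (q ^ (i + 1) - 1)) ≠ 0 :=
      Finset.prod_ne_zero_iff.mpr fun i _ => hterm i
    rw [Finset.prod_range_succ, Nat.factorization_mul hprod (hterm n), Finsupp.add_apply,
      ih (by omega), valV q ℓ hℓ hq3 hdvd (n + 1) (by omega)]
    have hdvditer : ∀ j : ℕ, (ℓ ^ j ∣ n + 1) ↔ j ≤ (n + 1).factorization ℓ := fun j =>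
      Nat.Prime.pow_dvd_iff_le_factorization hℓ (by omega)
    set v := (n + 1).factorization ℓ with hvdef
    have hvJ : v ≤ J := by
      have hd1 : ℓ ^ v ∣ n + 1 := (hdvditer v).mpr le_rfl
      have hd2 : ℓ ^ v ≤ n + 1 := Nat.le_of_dvd (by omega) hd1
      by_contra hcon
      push_neg at hcon
      have h4 : ℓ ^ J ≤ ℓ ^ v := Nat.pow_le_pow_right hℓ.one_lt.le (by omega)
      omega
    have hfil : Finset.filter (fun j => j ≤ v) (Finset.Icc 1 J) = Finset.Icc 1 v := by
      ext j
      simp only [Finset.mem_filter, Finset.mem_Icc]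
      omega
    have hsum : ∑ j ∈ Finset.Icc 1 J, (if j = 1 then c + 1 else 1) * ((n + 1) / ℓ ^ j)
        = (∑ j ∈ Finset.Icc 1 J, (if j = 1 then c + 1 else 1) * (n / ℓ ^ j))
          + ((if 1 ≤ v then c else 0) + v) := by
      calc ∑ j ∈ Finset.Icc 1 J, (if j = 1 then c + 1 else 1) * ((n + 1) / ℓ ^ j)
          = ∑ j ∈ Finset.Icc 1 J, ((if j = 1 then c + 1 else 1) * (n / ℓ ^ j)
              + (if j ≤ v then (if j = 1 then c + 1 else 1) else 0)) := by
            refine Finset.sum_congr rfl fun j _ => ?_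
            rw [Nat.succ_div, Nat.mul_add]
            congr 1
            simp only [hdvditer j]
            split_ifs <;> ring
        _ = (∑ j ∈ Finset.Icc 1 J, (if j = 1 then c + 1 else 1) * (n / ℓ ^ j))
              + ∑ j ∈ Finset.Icc 1 J, (if j ≤ v then (if j = 1 then c + 1 else 1) else 0) :=
            Finset.sum_add_distrib
        _ = (∑ j ∈ Finset.Icc 1 J, (if j = 1 then c + 1 else 1) * (n / ℓ ^ j))
              + ((if 1 ≤ v then c else 0) + v) := by
            rw [← Finset.sum_filter, hfil, sumE]
    rw [hsum]
    have h1v : ℓ ∣ n + 1 ↔ 1 ≤ v := by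
      have := hdvditer 1
      rwa [pow_one] at this
    rw [← hc]
    simp only [h1v]
    ring
private lemma algSwap (s t : Finset ℕ) (a p : ℕ → ℕ) (e : ℕ → ℕ) (d : ℕ → ℕ → ℕ) (A : ℕ) :
    ∑ k ∈ s, a k * (A * p k + ∑ j ∈ t, e j * d k j)
      = A * (∑ k ∈ s, a k * p k) + ∑ j ∈ t, e j * ∑ k ∈ s, a k * d k j := by
  simp_rw [Nat.mul_add, Finset.sum_add_distrib, Finset.mul_sum]
  congr 1
  · exact Finset.sum_congr rfl fun k _ => by ring
  · rw [Finset.sum_comm]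
    exact Finset.sum_congr rfl fun k _ => Finset.sum_congr rfl fun j _ => by ring

theorem stmt_6 (q ℓ m : ℕ) (hq : IsPrimePow q) (hℓ : ℓ.Prime) (hdvd : ℓ ∣ q - 1) :
    (∏ i ∈ Finset.range m, (q ^ (i + 1) - 1)).factorization ℓ =
      ∑ i ∈ Finset.range (Nat.digits ℓ m).length,
        (Nat.digits ℓ m).getD i 0 *
          (∏ j ∈ Finset.range (ℓ ^ i), (q ^ (j + 1) - 1)).factorization ℓ := by
  have hq2 : 2 ≤ q := hq.two_le
  have hℓ2 : 2 ≤ ℓ := hℓ.two_le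
  have hq3 : 3 ≤ q := by
    have hle : ℓ ≤ q - 1 := Nat.le_of_dvd (by omega) hdvd
    omega
  have hF := formulaF q ℓ hℓ hq3 hdvd (if ℓ = 2 then (q + 1).factorization 2 - 1 else 0) rfl
  have hmlt : m < ℓ ^ (Nat.digits ℓ m).length := Nat.lt_base_pow_length_digits hℓ.one_lt
  have hdig : ∀ j : ℕ, m / ℓ ^ j = ∑ k ∈ Finset.range (Nat.digits ℓ m).length,
      (Nat.digits ℓ m).getD k 0 * (ℓ ^ k / ℓ ^ j) := by
    intro j
    have h := myD ℓ hℓ2 (Nat.digits ℓ m)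
      (fun x hx => Nat.digits_lt_base hℓ.one_lt hx) j
    rwa [Nat.ofDigits_digits] at h
  have hm : ∑ k ∈ Finset.range (Nat.digits ℓ m).length,
      (Nat.digits ℓ m).getD k 0 * ℓ ^ k = m := by
    have h := hdig 0
    simp only [pow_zero, Nat.div_one] at h
    exact h.symm
  have hRHS : ∀ k ∈ Finset.range (Nat.digits ℓ m).length,
      (Nat.digits ℓ m).getD k 0 *
          (∏ j ∈ Finset.range (ℓ ^ k), (q ^ (j + 1) - 1)).factorization ℓ
        = (Nat.digits ℓ m).getD k 0 *
            ((q - 1).factorization ℓ * ℓ ^ k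
              + ∑ j ∈ Finset.Icc 1 (Nat.digits ℓ m).length,
                  (if j = 1 then (if ℓ = 2 then (q + 1).factorization 2 - 1 else 0) + 1 else 1)
                    * (ℓ ^ k / ℓ ^ j)) := by
    intro k hk
    rw [hF (Nat.digits ℓ m).length (ℓ ^ k)
      (Nat.pow_lt_pow_right hℓ.one_lt (Finset.mem_range.mp hk))]
  rw [hF (Nat.digits ℓ m).length m hmlt, Finset.sum_congr rfl hRHS, algSwap, hm]
  congr 1
  exact Finset.sum_congr rfl fun j _ => by rw [hdig j]
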